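/- arXiv:2302.10508 — 2 statements merged into one kernel-verified Lean document; each statement's English description precedes it below -/
import Mathlib

section
/- Let G be a group acting on a nonempty compact Hausdorff topological space X such that for every g ∈ G the translation map x ↦ g • x is continuous. For a function f : X → X, let O(f) denote the closure, in the space of all functions X → X equipped with the product (pointwise convergence) topology, of the set {(x ↦ h • x) ∘ f : h ∈ G}. Then for all functions f, g : X → X one has O(f ∘ g) = {e ∘ g : e ∈ O(f)}. -/
open Set

/-- `orbitClosure G f` is the closure, in the space `X → X` with the product
(pointwise convergence) topology, of the set of left `G`-translates of `f`. -/
def orbitClosure (G : Type*) {X : Type*} [Group G] [MulAction G X]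
    [TopologicalSpace X] (f : X → X) : Set (X → X) :=
  closure {e : X → X | ∃ h : G, e = (fun x => h • x) ∘ f}

/-- `O(f ∘ g) = O(f) ∘ g`. -/
theorem orbitClosure_comp
    {G X : Type*} [Group G] [MulAction G X]
    [TopologicalSpace X] [CompactSpace X] [T2Space X] [Nonempty X]
    (hcont : ∀ g : G, Continuous fun x : X => g • x)
    (f g : X → X) :
    orbitClosure G (f ∘ g) = {e ∘ g | e ∈ orbitClosure G f} := by
  have hΦ : Continuous (fun e : X → X => e ∘ g) :=
    continuous_pi fun x => continuous_apply (g x)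
  have hset : {e : X → X | ∃ h : G, e = (fun x => h • x) ∘ (f ∘ g)} =
      (fun e : X → X => e ∘ g) '' {e : X → X | ∃ h : G, e = (fun x => h • x) ∘ f} := by
    ext e
    constructor
    · rintro ⟨h, rfl⟩; exact ⟨_, ⟨h, rfl⟩, rfl⟩
    · rintro ⟨e', ⟨h, rfl⟩, rfl⟩; exact ⟨h, rfl⟩
  have hRHS : {e ∘ g | e ∈ orbitClosure G f} =
      (fun e : X → X => e ∘ g) '' orbitClosure G f := rfl
  rw [hRHS]
  unfold orbitClosure
  rw [hset]
  have hK : IsCompact (closure {e : X → X | ∃ h : G, e = (fun x => h • x) ∘ f}) :=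
    isClosed_closure.isCompact
  have hcl : IsClosed ((fun e : X → X => e ∘ g) ''
      closure {e : X → X | ∃ h : G, e = (fun x => h • x) ∘ f}) :=
    (hK.image hΦ).isClosed
  apply Subset.antisymm
  · exact closure_minimal (image_mono subset_closure) hcl
  · exact image_closure_subset_closure_image hΦ
end

section
/- Let G be a group acting on a nonempty compact Hausdorff topological space X such that for every g ∈ G the translation map x ↦ g • x is continuous, and let E(X) be the enveloping semigroup of the flow. The set of almost periodic elements of E(X) is a left ideal: if f ∈ E(X) is almost periodic and e ∈ E(X), then e ∘ f belongs to E(X) and e ∘ f is almost periodic. -/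
/-- The enveloping semigroup of the `G`-flow `X`: the closure in `X → X` (product
topology) of the set of translation maps. -/
def envSemigroup (G X : Type*) [Group G] [MulAction G X] [TopologicalSpace X] :
    Set (X → X) :=
  closure {e : X → X | ∃ g : G, e = fun x => g • x}

/-- Closure of the `G`-orbit of `f : X → X` under left translation. -/
def funOrbitClosure (G : Type*) {X : Type*} [Group G] [MulAction G X]
    [TopologicalSpace X] (f : X → X) : Set (X → X) :=
  closure {e : X → X | ∃ h : G, e = (fun x => h • x) ∘ f}

/-- A subflow of the function space `X → X` under the `G`-action
`h • e = (fun x => h • x) ∘ e`. -/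
def IsFunSubflow (G : Type*) {X : Type*} [Group G] [MulAction G X]
    [TopologicalSpace X] (M : Set (X → X)) : Prop :=
  M.Nonempty ∧ IsClosed M ∧ ∀ h : G, ∀ e ∈ M, ((fun x => h • x) ∘ e) ∈ M

/-- `f` is almost periodic if the closure of its `G`-orbit is a minimal subflow. -/
def IsAlmostPeriodicFun (G : Type*) {X : Type*} [Group G] [MulAction G X]
    [TopologicalSpace X] (f : X → X) : Prop :=
  IsFunSubflow G (funOrbitClosure G f) ∧
    ∀ M ⊆ funOrbitClosure G f, IsFunSubflow G M → M = funOrbitClosure G f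


section Aux
variable {G X : Type*} [Group G] [MulAction G X] [TopologicalSpace X]

private lemma continuous_leftComp (hcont : ∀ g : G, Continuous fun x : X => g • x) (h : G) :
    Continuous fun u : X → X => (fun x => h • x) ∘ u :=
  continuous_pi fun x => (hcont h).comp (continuous_apply x)

private lemma continuous_rightComp (f : X → X) :
    Continuous fun u : X → X => u ∘ f :=
  continuous_pi fun x => continuous_apply (f x)

private lemma subflow_orbitClosure (hcont : ∀ g : G, Continuous fun x : X => g • x)
    (f : X → X) : IsFunSubflow G (funOrbitClosure G f) := by
  refine ⟨⟨f, subset_closure ⟨1, by funext x; simp⟩⟩, isClosed_closure, ?_⟩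
  intro h u hu
  exact map_mem_closure (continuous_leftComp hcont h) hu
    (fun v ⟨k, hk⟩ => ⟨h * k, by subst hk; funext x; simp [mul_smul]⟩)

private lemma comp_mem_orbitClosure (hcont : ∀ g : G, Continuous fun x : X => g • x)
    (f e : X → X) (he : e ∈ envSemigroup G X) : e ∘ f ∈ funOrbitClosure G f :=
  map_mem_closure (f := fun u => u ∘ f) (continuous_rightComp f) he
    (fun v ⟨g, hg⟩ => ⟨g, by subst hg; rfl⟩)

private lemma orbitClosure_subset_env (hcont : ∀ g : G, Continuous fun x : X => g • x)
    (f : X → X) (hf : f ∈ envSemigroup G X) : funOrbitClosure G f ⊆ envSemigroup G X := by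
  refine closure_minimal ?_ isClosed_closure
  rintro v ⟨h, rfl⟩
  exact map_mem_closure (continuous_leftComp hcont h) hf
    (fun w ⟨k, hk⟩ => ⟨h * k, by subst hk; funext x; simp [mul_smul]⟩)

end Aux

/-- The almost periodic elements of the enveloping semigroup form a left ideal. -/
theorem almostPeriodic_leftIdeal
    {G X : Type*} [Group G] [MulAction G X]
    [TopologicalSpace X] [CompactSpace X] [T2Space X] [Nonempty X]
    (hcont : ∀ g : G, Continuous fun x : X => g • x)
    (f : X → X) (hf : f ∈ envSemigroup G X) (hap : IsAlmostPeriodicFun G f)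
    (e : X → X) (he : e ∈ envSemigroup G X) :
    e ∘ f ∈ envSemigroup G X ∧ IsAlmostPeriodicFun G (e ∘ f) := by
  have hef : e ∘ f ∈ funOrbitClosure G f := comp_mem_orbitClosure hcont f e he
  have hsub : funOrbitClosure G (e ∘ f) ⊆ funOrbitClosure G f := by
    refine closure_minimal ?_ isClosed_closure
    rintro v ⟨h, rfl⟩
    exact (subflow_orbitClosure hcont f).2.2 h _ hef
  have heq : funOrbitClosure G (e ∘ f) = funOrbitClosure G f :=
    hap.2 _ hsub (subflow_orbitClosure hcont (e ∘ f))
  refine ⟨orbitClosure_subset_env hcont f hf hef, subflow_orbitClosure hcont (e ∘ f), ?_⟩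
  intro M hM hMs
  rw [heq] at hM ⊢
  exact hap.2 M hM hMs
end
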